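/- Let p ≥ 1 be an integer and define g_p(θ) := Σ_{l=−p}^{p} ( E(2p+1, p+l) / (2p+1)! ) · cos(l·θ) for θ ∈ ℝ. Then: (i) g_p(θ) > 0 for every θ ∈ ℝ; and (ii) for all θ₁, θ₂ ∈ ℝ with cos θ₁ ≤ cos θ₂ one has g_p(θ₁) ≤ g_p(θ₂). (For a uniform periodic grid, h·g_p(2jhπ) is the j-th eigenvalue of the periodic B-spline mass matrix of degree p, so this says that the symbol of the mass matrix is positive and monotone in cos(2jhπ).) -/

import Mathlib

open MeasureTheory

/-- The Eulerian numbers `E(m,k)` (as real numbers), defined by `E(0,0)=1`, `E(0,k)=0`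
for `k ≠ 0`, and `E(m,k) = (m−k)·E(m−1,k−1) + (k+1)·E(m−1,k)` for `m ≥ 1`. -/
noncomputable def eulerianNum : ℕ → ℤ → ℝ
  | 0, k => if k = 0 then 1 else 0
  | (m + 1), k => (((m : ℝ) + 1) - (k : ℝ)) * eulerianNum m (k - 1) + ((k : ℝ) + 1) * eulerianNum m k

/-- The symbol `g_p(θ) = Σ_{l=−p}^{p} (E(2p+1,p+l)/(2p+1)!)·cos(lθ)` of the periodic
B-spline mass matrix of degree `p`. -/
noncomputable def massSymbol (p : ℕ) (θ : ℝ) : ℝ :=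
  ∑ l ∈ Finset.Icc (-(p : ℤ)) (p : ℤ),
    (eulerianNum (2 * p + 1) ((p : ℤ) + l) / (Nat.factorial (2 * p + 1) : ℝ)) *
      Real.cos ((l : ℝ) * θ)

/-! ### Auxiliary development -/

lemma eulerianNum_neg : ∀ (m : ℕ) (k : ℤ), k < 0 → eulerianNum m k = 0 := by
  intro m
  induction m with
  | zero => intro k hk; simp [eulerianNum]; omega
  | succ m ih =>
    intro k hk
    rw [eulerianNum, ih (k-1) (by omega), ih k hk]
    ring

lemma eulerianNum_ge : ∀ (m : ℕ) (k : ℤ), (m : ℤ) ≤ k → 0 < m → eulerianNum m k = 0 := by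
  intro m
  induction m with
  | zero => omega
  | succ m ih =>
    intro k hk _
    rcases Nat.eq_zero_or_pos m with hm | hm
    · subst hm
      rw [eulerianNum]
      rcases eq_or_lt_of_le hk with h | h
      · simp only [eulerianNum, ← h]
        norm_num
      · simp only [eulerianNum]
        rw [if_neg (by omega), if_neg (by omega)]
        ring
    · rw [eulerianNum, ih (k-1) (by omega) hm, ih k (by omega) hm]
      ring

noncomputable def eA (p : ℕ) (l : ℤ) : ℝ :=
  eulerianNum (2*p+1) ((p:ℤ)+l) / (Nat.factorial (2*p+1) : ℝ)

lemma eA_eq_zero (p : ℕ) (l : ℤ) (h : l < -(p:ℤ) ∨ (p:ℤ) < l) : eA p l = 0 := by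
  unfold eA
  rcases h with h | h
  · rw [eulerianNum_neg _ _ (by omega)]; simp
  · rw [eulerianNum_ge _ _ (by push_cast; omega) (by omega)]; simp

lemma eulerianNum_succ (m : ℕ) (k : ℤ) : eulerianNum (m+1) k
    = (((m:ℝ)+1) - (k:ℝ)) * eulerianNum m (k-1) + ((k:ℝ)+1) * eulerianNum m k := rfl

lemma eA_rec (p : ℕ) (l : ℤ) :
    (2*(p:ℝ)+2) * (2*(p:ℝ)+3) * eA (p+1) l
      = ((p:ℝ)+2-(l:ℝ))^2 * eA p (l-1)
        + (2*((p:ℝ)+1)^2 + 2*((p:ℝ)+1) - 2*(l:ℝ)^2) * eA p l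
        + ((p:ℝ)+(l:ℝ)+2)^2 * eA p (l+1) := by
  unfold eA
  have h1 : 2*(p+1)+1 = (2*p+1)+1+1 := by ring
  rw [h1, eulerianNum_succ ((2*p+1)+1), eulerianNum_succ (2*p+1), eulerianNum_succ (2*p+1)]
  have a1 : ((p:ℤ)+1+l)-1-1 = (p:ℤ)+(l-1) := by ring
  have a2 : ((p:ℤ)+1+l)-1 = (p:ℤ)+l := by ring
  have a3 : ((p+1:ℕ):ℤ)+l = (p:ℤ)+1+l := by omega
  rw [a3, a1, a2]
  have hfac : (Nat.factorial ((2*p+1)+1+1) : ℝ)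
      = (2*(p:ℝ)+3) * ((2*(p:ℝ)+2) * (Nat.factorial (2*p+1) : ℝ)) := by
    rw [Nat.factorial_succ, Nat.factorial_succ]
    push_cast
    ring
  rw [hfac]
  have hne : (Nat.factorial (2*p+1) : ℝ) ≠ 0 := by positivity
  have e1 := congrArg (eulerianNum (2*p+1)) (show (p:ℤ)+(l+1) = (p:ℤ)+l+1 by ring)
  rw [e1]
  field_simp
  push_cast
  rw [show (p:ℤ)+1+l = (p:ℤ)+l+1 by ring]
  ring

noncomputable def Bc : ℕ → ℕ → ℝ
  | 0, 0 => 1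
  | 0, _ + 1 => 0
  | (p+1), k =>
      (2*((k:ℝ)+1)*(2*(k:ℝ)+1) * Bc p (k+1)
        + (4*(k:ℝ)*((p:ℝ)+1-(k:ℝ)) + (k:ℝ) + ((p:ℝ)+1)) * Bc p k
        + (match k with
           | 0 => 0
           | (j+1) => ((p:ℝ)+1-(j:ℝ))^2 * Bc p j))
      / (((p:ℝ)+1) * (2*((p:ℝ)+1)+1))

lemma Bc_succ (p k : ℕ) : Bc (p+1) k =
      (2*((k:ℝ)+1)*(2*(k:ℝ)+1) * Bc p (k+1)
        + (4*(k:ℝ)*((p:ℝ)+1-(k:ℝ)) + (k:ℝ) + ((p:ℝ)+1)) * Bc p k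
        + (match k with
           | 0 => (0:ℝ)
           | (j+1) => ((p:ℝ)+1-(j:ℝ))^2 * Bc p j))
      / (((p:ℝ)+1) * (2*((p:ℝ)+1)+1)) := rfl

lemma Bc_succ_succ (p j : ℕ) : Bc (p+1) (j+1) =
      (2*((j:ℝ)+1+1)*(2*((j:ℝ)+1)+1) * Bc p (j+2)
        + (4*((j:ℝ)+1)*((p:ℝ)+1-((j:ℝ)+1)) + ((j:ℝ)+1) + ((p:ℝ)+1)) * Bc p (j+1)
        + ((p:ℝ)+1-(j:ℝ))^2 * Bc p j)
      / (((p:ℝ)+1) * (2*((p:ℝ)+1)+1)) := by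
  rw [Bc_succ]
  push_cast
  ring_nf

lemma Bc_eq_zero : ∀ (p k : ℕ), p < k → Bc p k = 0 := by
  intro p
  induction p with
  | zero => intro k hk; match k, hk with | (k+1), _ => rfl
  | succ p ih =>
    intro k hk
    match k, hk with
    | (j+1), hk =>
      rw [Bc_succ_succ, ih (j+2) (by omega), ih (j+1) (by omega), ih j (by omega)]
      simp

lemma Bc_nonneg : ∀ (p k : ℕ), (k:ℝ) ≤ (p:ℝ) + 1 → 0 ≤ Bc p k := by
  intro p
  induction p with
  | zero =>
    intro k hk
    match k with
    | 0 => norm_num [Bc]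
    | 1 => norm_num [Bc]
    | (k+2) => push_cast at hk; linarith [Nat.cast_nonneg (α:=ℝ) k]
  | succ p ih =>
    intro k hk
    rw [Bc_succ]
    apply div_nonneg _ (by positivity)
    have h1 : 0 ≤ Bc p (k+1) := by
      rcases le_or_gt (k+1) (p+1) with h | h
      · exact ih (k+1) (by push_cast; exact_mod_cast h)
      · rw [Bc_eq_zero p (k+1) (by omega)]
    have h2 : 0 ≤ Bc p k := by
      rcases le_or_gt k (p+1) with h | h
      · exact ih k (by exact_mod_cast Nat.cast_le.mpr (by omega : k ≤ p+1))
      · rw [Bc_eq_zero p k (by omega)]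
    have h3 : 0 ≤ (4*(k:ℝ)*((p:ℝ)+1-(k:ℝ)) + (k:ℝ) + ((p:ℝ)+1)) * Bc p k := by
      rcases le_or_gt k (p+1) with h | h
      · have hk1 : (k:ℝ) ≤ (p:ℝ)+1 := by exact_mod_cast Nat.cast_le.mpr (by omega : k ≤ p+1)
        have : (0:ℝ) ≤ (k:ℝ) := Nat.cast_nonneg k
        apply mul_nonneg (by nlinarith) h2
      · rw [Bc_eq_zero p k (by omega)]; simp
    have h4 : 0 ≤ (match k with
           | 0 => (0:ℝ)
           | (j+1) => ((p:ℝ)+1-(j:ℝ))^2 * Bc p j) := by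
      match k with
      | 0 => simp
      | (j+1) =>
        apply mul_nonneg (by positivity)
        exact ih j (by push_cast at hk ⊢; linarith)
    positivity

lemma Bc_zero_pos : ∀ p : ℕ, 0 < Bc p 0 := by
  intro p
  induction p with
  | zero => norm_num [Bc]
  | succ p ih =>
    have h0 : Bc (p+1) 0 =
      (2*((0:ℝ)+1)*(2*(0:ℝ)+1) * Bc p 1
        + (4*(0:ℝ)*((p:ℝ)+1-(0:ℝ)) + (0:ℝ) + ((p:ℝ)+1)) * Bc p 0 + 0)
      / (((p:ℝ)+1) * (2*((p:ℝ)+1)+1)) := by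
      rw [Bc_succ]; norm_num
    rw [h0]
    have h1 : 0 ≤ Bc p 1 := Bc_nonneg p 1 (by push_cast; linarith [Nat.cast_nonneg (α:=ℝ) p])
    apply div_pos _ (by positivity)
    have : 0 < ((p:ℝ)+1) * Bc p 0 := by positivity
    nlinarith

/-! ### Function-level objects -/

noncomputable def Fs (p : ℕ) (θ : ℝ) : ℝ :=
  ∑ k ∈ Finset.range (p+1), Bc p k * (1 + Real.cos θ)^k

noncomputable def FD1 (p : ℕ) (θ : ℝ) : ℝ :=
  ∑ k ∈ Finset.range (p+1), Bc p k * ((k:ℝ) * (1 + Real.cos θ)^(k-1) * (-Real.sin θ))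

noncomputable def FD2 (p : ℕ) (θ : ℝ) : ℝ :=
  ∑ k ∈ Finset.range (p+1), Bc p k *
    (((k:ℝ) * (((k-1:ℕ):ℝ) * (1 + Real.cos θ)^(k-1-1) * (-Real.sin θ))) * (-Real.sin θ)
      + ((k:ℝ) * (1 + Real.cos θ)^(k-1)) * (-Real.cos θ))

lemma hasDerivAt_one_add_cos_pow (k : ℕ) (θ : ℝ) :
    HasDerivAt (fun θ : ℝ => (1 + Real.cos θ)^k)
      ((k:ℝ) * (1 + Real.cos θ)^(k-1) * (-Real.sin θ)) θ :=
  ((Real.hasDerivAt_cos θ).const_add 1).pow k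

lemma hasDerivAt_Fs (p : ℕ) (θ : ℝ) : HasDerivAt (Fs p) (FD1 p θ) θ := by
  apply HasDerivAt.fun_sum
  intro k _
  exact (hasDerivAt_one_add_cos_pow k θ).const_mul (Bc p k)

lemma hasDerivAt_FD1 (p : ℕ) (θ : ℝ) : HasDerivAt (FD1 p) (FD2 p θ) θ := by
  apply HasDerivAt.fun_sum
  intro k _
  apply HasDerivAt.const_mul
  have h1 : HasDerivAt (fun θ : ℝ => (k:ℝ) * (1 + Real.cos θ)^(k-1))
      ((k:ℝ) * (((k-1:ℕ):ℝ) * (1 + Real.cos θ)^(k-1-1) * (-Real.sin θ))) θ :=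
    (hasDerivAt_one_add_cos_pow (k-1) θ).const_mul (k:ℝ)
  have h2 : HasDerivAt (fun θ : ℝ => -Real.sin θ) (-Real.cos θ) θ :=
    (Real.hasDerivAt_sin θ).neg
  exact h1.mul h2

noncomputable def D1 (p : ℕ) (θ : ℝ) : ℝ :=
  ∑ l ∈ Finset.Icc (-(p:ℤ)) (p:ℤ), eA p l * (-Real.sin ((l:ℝ)*θ) * (l:ℝ))

noncomputable def D2 (p : ℕ) (θ : ℝ) : ℝ :=
  ∑ l ∈ Finset.Icc (-(p:ℤ)) (p:ℤ), eA p l * (-Real.cos ((l:ℝ)*θ) * (l:ℝ) * (l:ℝ))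

lemma mass_eq (p : ℕ) (θ : ℝ) :
    massSymbol p θ = ∑ l ∈ Finset.Icc (-(p:ℤ)) (p:ℤ), eA p l * Real.cos ((l:ℝ)*θ) := rfl

lemma hasDerivAt_cos_int (l : ℤ) (θ : ℝ) :
    HasDerivAt (fun θ : ℝ => Real.cos ((l:ℝ)*θ)) (-Real.sin ((l:ℝ)*θ) * (l:ℝ)) θ := by
  have h : HasDerivAt (fun θ : ℝ => (l:ℝ)*θ) (l:ℝ) θ := by
    simpa using (hasDerivAt_id θ).const_mul (l:ℝ)
  exact (Real.hasDerivAt_cos ((l:ℝ)*θ)).comp θ h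

lemma hasDerivAt_sin_int (l : ℤ) (θ : ℝ) :
    HasDerivAt (fun θ : ℝ => -Real.sin ((l:ℝ)*θ) * (l:ℝ)) (-Real.cos ((l:ℝ)*θ) * (l:ℝ) * (l:ℝ)) θ := by
  have h : HasDerivAt (fun θ : ℝ => (l:ℝ)*θ) (l:ℝ) θ := by
    simpa using (hasDerivAt_id θ).const_mul (l:ℝ)
  have := (((Real.hasDerivAt_sin ((l:ℝ)*θ)).comp θ h).neg).mul_const (l:ℝ)
  exact this.congr_deriv (by ring)

lemma hasDerivAt_mass (p : ℕ) (θ : ℝ) : HasDerivAt (massSymbol p) (D1 p θ) θ := by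
  have : massSymbol p = fun θ => ∑ l ∈ Finset.Icc (-(p:ℤ)) (p:ℤ), eA p l * Real.cos ((l:ℝ)*θ) :=
    funext fun θ => mass_eq p θ
  rw [this]
  apply HasDerivAt.fun_sum
  intro l _
  exact (hasDerivAt_cos_int l θ).const_mul (eA p l)

lemma hasDerivAt_D1 (p : ℕ) (θ : ℝ) : HasDerivAt (D1 p) (D2 p θ) θ := by
  apply HasDerivAt.fun_sum
  intro l _
  exact (hasDerivAt_sin_int l θ).const_mul (eA p l)

/-! ### The two recurrence identities -/

lemma sum_shift (a b c : ℤ) (f : ℤ → ℝ) :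
    ∑ l ∈ Finset.Icc a b, f l = ∑ m ∈ Finset.Icc (a-c) (b-c), f (m+c) := by
  rw [show Finset.Icc a b = Finset.Icc ((a-c)+c) ((b-c)+c) by ring_nf,
    ← Finset.map_add_right_Icc, Finset.sum_map]
  rfl

lemma trig_key (q x θ : ℝ) :
    (q-x)^2 * Real.cos ((x+1)*θ) + (2*q^2+2*q-2*x^2) * Real.cos (x*θ)
      + (q+x)^2 * Real.cos ((x-1)*θ)
    = 2*((q^2*(1+Real.cos θ)+q) * Real.cos (x*θ)
        - 2*q*Real.sin θ*(-Real.sin (x*θ)*x) + (1-Real.cos θ)*(-Real.cos (x*θ)*x*x)) := by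
  rw [show (x+1)*θ = x*θ + θ by ring, show (x-1)*θ = x*θ - θ by ring,
    Real.cos_add, Real.cos_sub]
  ring

lemma mass_rec (p : ℕ) (θ : ℝ) :
    ((p:ℝ)+1) * (2*((p:ℝ)+1)+1) * massSymbol (p+1) θ
      = (((p:ℝ)+1)^2*(1+Real.cos θ) + ((p:ℝ)+1)) * massSymbol p θ
        - 2*((p:ℝ)+1)*Real.sin θ * D1 p θ + (1-Real.cos θ) * D2 p θ := by
  have h2 : (2:ℝ) ≠ 0 := two_ne_zero
  apply mul_left_cancel₀ h2
  have hset : Finset.Icc (-((p+1:ℕ):ℤ)) ((p+1:ℕ):ℤ) = Finset.Icc (-(p:ℤ)-1) ((p:ℤ)+1) := by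
    congr 1 <;> push_cast <;> ring
  have step1 : 2 * (((p:ℝ)+1) * (2*((p:ℝ)+1)+1) * massSymbol (p+1) θ)
      = ∑ l ∈ Finset.Icc (-(p:ℤ)-1) ((p:ℤ)+1),
          (((p:ℝ)+2-(l:ℝ))^2 * eA p (l-1) * Real.cos ((l:ℝ)*θ)
            + (2*((p:ℝ)+1)^2 + 2*((p:ℝ)+1) - 2*(l:ℝ)^2) * eA p l * Real.cos ((l:ℝ)*θ)
            + ((p:ℝ)+(l:ℝ)+2)^2 * eA p (l+1) * Real.cos ((l:ℝ)*θ)) := by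
    rw [mass_eq, hset, Finset.mul_sum, Finset.mul_sum]
    apply Finset.sum_congr rfl
    intro l _
    have := eA_rec p l
    have hpush : ((p+1:ℕ):ℝ) = (p:ℝ)+1 := by push_cast; ring
    calc 2 * (((p:ℝ)+1) * (2*((p:ℝ)+1)+1) * (eA (p+1) l * Real.cos ((l:ℝ)*θ)))
        = ((2*(p:ℝ)+2) * (2*(p:ℝ)+3) * eA (p+1) l) * Real.cos ((l:ℝ)*θ) := by ring
      _ = _ := by rw [this]; ring
  rw [step1]
  rw [Finset.sum_add_distrib, Finset.sum_add_distrib]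
  -- T1
  have hT1 : ∑ l ∈ Finset.Icc (-(p:ℤ)-1) ((p:ℤ)+1),
        ((p:ℝ)+2-(l:ℝ))^2 * eA p (l-1) * Real.cos ((l:ℝ)*θ)
      = ∑ m ∈ Finset.Icc (-(p:ℤ)) ((p:ℤ)),
        ((p:ℝ)+1-(m:ℝ))^2 * eA p m * Real.cos (((m:ℝ)+1)*θ) := by
    rw [sum_shift (-(p:ℤ)-1) ((p:ℤ)+1) 1]
    rw [show (-(p:ℤ)-1-1) = -((p:ℤ)+2) by ring, show ((p:ℤ)+1-1) = (p:ℤ) by ring]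
    rw [← Finset.sum_subset (Finset.Icc_subset_Icc (by omega) le_rfl :
        Finset.Icc (-(p:ℤ)) ((p:ℤ)) ⊆ Finset.Icc (-((p:ℤ)+2)) ((p:ℤ)))]
    · apply Finset.sum_congr rfl
      intro m hm
      have e1 : m + 1 - 1 = m := by ring
      rw [e1]
      have e2 : ((m+1:ℤ):ℝ) = (m:ℝ)+1 := by push_cast; ring
      rw [e2]
      ring
    · intro m hm hnot
      simp only [Finset.mem_Icc] at hm hnot
      rw [eA_eq_zero p (m+1-1) (by omega)]
      ring
  -- T2
  have hT2 : ∑ l ∈ Finset.Icc (-(p:ℤ)-1) ((p:ℤ)+1),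
        (2*((p:ℝ)+1)^2 + 2*((p:ℝ)+1) - 2*(l:ℝ)^2) * eA p l * Real.cos ((l:ℝ)*θ)
      = ∑ m ∈ Finset.Icc (-(p:ℤ)) ((p:ℤ)),
        (2*((p:ℝ)+1)^2 + 2*((p:ℝ)+1) - 2*(m:ℝ)^2) * eA p m * Real.cos ((m:ℝ)*θ) := by
    rw [← Finset.sum_subset (Finset.Icc_subset_Icc (by omega) (by omega) :
        Finset.Icc (-(p:ℤ)) ((p:ℤ)) ⊆ Finset.Icc (-(p:ℤ)-1) ((p:ℤ)+1))]
    intro m hm hnot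
    simp only [Finset.mem_Icc] at hm hnot
    rw [eA_eq_zero p m (by omega)]
    ring
  -- T3
  have hT3 : ∑ l ∈ Finset.Icc (-(p:ℤ)-1) ((p:ℤ)+1),
        ((p:ℝ)+(l:ℝ)+2)^2 * eA p (l+1) * Real.cos ((l:ℝ)*θ)
      = ∑ m ∈ Finset.Icc (-(p:ℤ)) ((p:ℤ)),
        ((p:ℝ)+1+(m:ℝ))^2 * eA p m * Real.cos (((m:ℝ)-1)*θ) := by
    rw [sum_shift (-(p:ℤ)-1) ((p:ℤ)+1) (-1)]
    rw [show (-(p:ℤ)-1-(-1)) = -(p:ℤ) by ring, show ((p:ℤ)+1-(-1)) = (p:ℤ)+2 by ring]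
    rw [← Finset.sum_subset (Finset.Icc_subset_Icc le_rfl (by omega) :
        Finset.Icc (-(p:ℤ)) ((p:ℤ)) ⊆ Finset.Icc (-(p:ℤ)) ((p:ℤ)+2))]
    · apply Finset.sum_congr rfl
      intro m hm
      have e1 : m + -1 + 1 = m := by ring
      rw [e1]
      have e2 : ((m+(-1):ℤ):ℝ) = (m:ℝ)-1 := by push_cast; ring
      rw [e2]
      ring
    · intro m hm hnot
      simp only [Finset.mem_Icc] at hm hnot
      rw [eA_eq_zero p (m+(-1)+1) (by omega)]
      ring
  rw [hT1, hT2, hT3, ← Finset.sum_add_distrib, ← Finset.sum_add_distrib]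
  have hcomb : ∀ m ∈ Finset.Icc (-(p:ℤ)) ((p:ℤ)),
      (((p:ℝ)+1-(m:ℝ))^2 * eA p m * Real.cos (((m:ℝ)+1)*θ)
        + (2*((p:ℝ)+1)^2 + 2*((p:ℝ)+1) - 2*(m:ℝ)^2) * eA p m * Real.cos ((m:ℝ)*θ)
        + ((p:ℝ)+1+(m:ℝ))^2 * eA p m * Real.cos (((m:ℝ)-1)*θ))
      = 2*((((p:ℝ)+1)^2*(1+Real.cos θ) + ((p:ℝ)+1)) * (eA p m * Real.cos ((m:ℝ)*θ))
          - 2*((p:ℝ)+1)*Real.sin θ * (eA p m * (-Real.sin ((m:ℝ)*θ) * (m:ℝ)))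
          + (1-Real.cos θ) * (eA p m * (-Real.cos ((m:ℝ)*θ) * (m:ℝ) * (m:ℝ)))) := by
    intro m _
    have := trig_key ((p:ℝ)+1) (m:ℝ) θ
    linear_combination eA p m * this
  rw [Finset.sum_congr rfl hcomb, mass_eq]
  unfold D1 D2
  rw [Finset.mul_sum, Finset.mul_sum, Finset.mul_sum]
  try rw [← Finset.sum_sub_distrib]
  try rw [← Finset.sum_add_distrib]
  try rw [Finset.mul_sum]

lemma key_k (q c s : ℝ) (hs : s^2 = 1 - c^2) (k : ℕ) :
    (q^2*(1+c)+q) * (1+c)^k - 2*q*s*((k:ℝ) * (1+c)^(k-1) * (-s))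
      + (1-c) * (((k:ℝ) * (((k-1:ℕ):ℝ) * (1+c)^(k-1-1) * (-s))) * (-s)
          + ((k:ℝ) * (1+c)^(k-1)) * (-c))
    = (q-(k:ℝ))^2 * (1+c)^(k+1) + (4*(k:ℝ)*(q-(k:ℝ))+(k:ℝ)+q) * (1+c)^k
      + 2*(k:ℝ)*(2*(k:ℝ)-1) * (1+c)^(k-1) := by
  rcases k with _ | _ | k
  · push_cast
    ring
  · push_cast
    linear_combination 2*q*hs
  · rw [show k+1+1-1 = k+1 from rfl, show k+1-1 = k from rfl]
    push_cast
    linear_combination (2*q*((k:ℝ)+2)*(1+c)^(k+1) + (1-c)*((k:ℝ)+2)*((k:ℝ)+1)*(1+c)^k) * hs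

lemma Bc_mul (p : ℕ) (j : ℕ) :
    (((p:ℝ)+1) * (2*((p:ℝ)+1)+1)) * Bc (p+1) j
      = 2*((j:ℝ)+1)*(2*(j:ℝ)+1) * Bc p (j+1)
        + (4*(j:ℝ)*(((p:ℝ)+1)-(j:ℝ)) + (j:ℝ) + ((p:ℝ)+1)) * Bc p j
        + (if j = 0 then 0 else (((p:ℝ)+1)-((j:ℝ)-1))^2 * Bc p (j-1)) := by
  have hne : (((p:ℝ)+1) * (2*((p:ℝ)+1)+1)) ≠ 0 := by positivity
  rcases j with _ | i
  · have h0 : Bc (p+1) 0 =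
      (2*((0:ℝ)+1)*(2*(0:ℝ)+1) * Bc p 1
        + (4*(0:ℝ)*((p:ℝ)+1-(0:ℝ)) + (0:ℝ) + ((p:ℝ)+1)) * Bc p 0 + 0)
      / (((p:ℝ)+1) * (2*((p:ℝ)+1)+1)) := by
      rw [Bc_succ]; norm_num
    rw [h0, mul_div_cancel₀ _ hne]
    norm_num
  · rw [Bc_succ_succ, mul_div_cancel₀ _ hne, if_neg (Nat.succ_ne_zero i)]
    rw [show i+1-1 = i from rfl]
    push_cast
    ring

lemma Fs_rec (p : ℕ) (θ : ℝ) :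
    (((p:ℝ)+1)^2*(1+Real.cos θ) + ((p:ℝ)+1)) * Fs p θ
        - 2*((p:ℝ)+1)*Real.sin θ * FD1 p θ + (1-Real.cos θ) * FD2 p θ
      = ((p:ℝ)+1) * (2*((p:ℝ)+1)+1) * Fs (p+1) θ := by
  have hs : Real.sin θ^2 = 1 - Real.cos θ^2 := Real.sin_sq θ
  have hLHS : (((p:ℝ)+1)^2*(1+Real.cos θ) + ((p:ℝ)+1)) * Fs p θ
        - 2*((p:ℝ)+1)*Real.sin θ * FD1 p θ + (1-Real.cos θ) * FD2 p θ
      = ∑ k ∈ Finset.range (p+1), Bc p k *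
          ((((p:ℝ)+1)-(k:ℝ))^2 * (1+Real.cos θ)^(k+1)
            + (4*(k:ℝ)*(((p:ℝ)+1)-(k:ℝ))+(k:ℝ)+((p:ℝ)+1)) * (1+Real.cos θ)^k
            + 2*(k:ℝ)*(2*(k:ℝ)-1) * (1+Real.cos θ)^(k-1)) := by
    unfold Fs FD1 FD2
    rw [Finset.mul_sum, Finset.mul_sum, Finset.mul_sum]
    rw [← Finset.sum_sub_distrib, ← Finset.sum_add_distrib]
    apply Finset.sum_congr rfl
    intro k _
    linear_combination Bc p k * key_k ((p:ℝ)+1) (Real.cos θ) (Real.sin θ) hs k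
  have hRHS : ((p:ℝ)+1) * (2*((p:ℝ)+1)+1) * Fs (p+1) θ
      = ∑ j ∈ Finset.range (p+2),
          (2*((j:ℝ)+1)*(2*(j:ℝ)+1) * Bc p (j+1)
            + (4*(j:ℝ)*(((p:ℝ)+1)-(j:ℝ)) + (j:ℝ) + ((p:ℝ)+1)) * Bc p j
            + (if j = 0 then 0 else (((p:ℝ)+1)-((j:ℝ)-1))^2 * Bc p (j-1)))
          * (1+Real.cos θ)^j := by
    unfold Fs
    rw [Finset.mul_sum]
    apply Finset.sum_congr rfl
    intro j _
    rw [← Bc_mul p j]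
    ring
  rw [hLHS, hRHS]
  have splitL : ∑ k ∈ Finset.range (p+1), Bc p k *
          ((((p:ℝ)+1)-(k:ℝ))^2 * (1+Real.cos θ)^(k+1)
            + (4*(k:ℝ)*(((p:ℝ)+1)-(k:ℝ))+(k:ℝ)+((p:ℝ)+1)) * (1+Real.cos θ)^k
            + 2*(k:ℝ)*(2*(k:ℝ)-1) * (1+Real.cos θ)^(k-1))
      = (∑ k ∈ Finset.range (p+1), Bc p k * ((((p:ℝ)+1)-(k:ℝ))^2 * (1+Real.cos θ)^(k+1)))
        + (∑ k ∈ Finset.range (p+1), Bc p k *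
            ((4*(k:ℝ)*(((p:ℝ)+1)-(k:ℝ))+(k:ℝ)+((p:ℝ)+1)) * (1+Real.cos θ)^k))
        + (∑ k ∈ Finset.range (p+1), Bc p k * (2*(k:ℝ)*(2*(k:ℝ)-1) * (1+Real.cos θ)^(k-1))) := by
    rw [← Finset.sum_add_distrib, ← Finset.sum_add_distrib]
    apply Finset.sum_congr rfl
    intro k _
    ring
  have splitR : ∑ j ∈ Finset.range (p+2),
          (2*((j:ℝ)+1)*(2*(j:ℝ)+1) * Bc p (j+1)
            + (4*(j:ℝ)*(((p:ℝ)+1)-(j:ℝ)) + (j:ℝ) + ((p:ℝ)+1)) * Bc p j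
            + (if j = 0 then 0 else (((p:ℝ)+1)-((j:ℝ)-1))^2 * Bc p (j-1)))
          * (1+Real.cos θ)^j
      = (∑ j ∈ Finset.range (p+2), 2*((j:ℝ)+1)*(2*(j:ℝ)+1) * Bc p (j+1) * (1+Real.cos θ)^j)
        + (∑ j ∈ Finset.range (p+2),
            (4*(j:ℝ)*(((p:ℝ)+1)-(j:ℝ)) + (j:ℝ) + ((p:ℝ)+1)) * Bc p j * (1+Real.cos θ)^j)
        + (∑ j ∈ Finset.range (p+2),
            (if j = 0 then 0 else (((p:ℝ)+1)-((j:ℝ)-1))^2 * Bc p (j-1)) * (1+Real.cos θ)^j) := by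
    rw [← Finset.sum_add_distrib, ← Finset.sum_add_distrib]
    apply Finset.sum_congr rfl
    intro j _
    ring
  rw [splitL, splitR]
  -- match piece 1 : U1 = V3
  have m1 : ∑ k ∈ Finset.range (p+1), Bc p k * ((((p:ℝ)+1)-(k:ℝ))^2 * (1+Real.cos θ)^(k+1))
      = ∑ j ∈ Finset.range (p+2),
          (if j = 0 then 0 else (((p:ℝ)+1)-((j:ℝ)-1))^2 * Bc p (j-1)) * (1+Real.cos θ)^j := by
    conv_rhs => rw [Finset.sum_range_succ']
    rw [if_pos rfl]
    simp only [Nat.succ_ne_zero, if_false, zero_mul, add_zero]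
    apply Finset.sum_congr rfl
    intro i _
    rw [show i+1-1 = i from rfl]
    push_cast
    ring
  -- match piece 2 : U2 = V2
  have m2 : ∑ k ∈ Finset.range (p+1), Bc p k *
        ((4*(k:ℝ)*(((p:ℝ)+1)-(k:ℝ))+(k:ℝ)+((p:ℝ)+1)) * (1+Real.cos θ)^k)
      = ∑ j ∈ Finset.range (p+2),
          (4*(j:ℝ)*(((p:ℝ)+1)-(j:ℝ)) + (j:ℝ) + ((p:ℝ)+1)) * Bc p j * (1+Real.cos θ)^j := by
    rw [Finset.sum_range_succ (fun j => (4*(j:ℝ)*(((p:ℝ)+1)-(j:ℝ)) + (j:ℝ) + ((p:ℝ)+1))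
        * Bc p j * (1+Real.cos θ)^j) (p+1)]
    rw [Bc_eq_zero p (p+1) (by omega)]
    rw [mul_zero, zero_mul, add_zero]
    apply Finset.sum_congr rfl
    intro k _
    ring
  -- match piece 3 : U3 = V1
  have m3 : ∑ k ∈ Finset.range (p+1), Bc p k * (2*(k:ℝ)*(2*(k:ℝ)-1) * (1+Real.cos θ)^(k-1))
      = ∑ j ∈ Finset.range (p+2), 2*((j:ℝ)+1)*(2*(j:ℝ)+1) * Bc p (j+1) * (1+Real.cos θ)^j := by
    have ext : ∑ k ∈ Finset.range (p+1), Bc p k * (2*(k:ℝ)*(2*(k:ℝ)-1) * (1+Real.cos θ)^(k-1))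
        = ∑ k ∈ Finset.range (p+3), Bc p k * (2*(k:ℝ)*(2*(k:ℝ)-1) * (1+Real.cos θ)^(k-1)) := by
      apply Finset.sum_subset (Finset.range_subset_range.mpr (by omega))
      intro k _ hk
      rw [Bc_eq_zero p k (by simp only [Finset.mem_range] at hk; omega)]
      ring
    rw [ext]
    conv_lhs => rw [Finset.sum_range_succ']
    have h00 : Bc p 0 * (2*((0:ℕ):ℝ)*(2*((0:ℕ):ℝ)-1) * (1+Real.cos θ)^(0-1)) = 0 := by
      norm_num
    rw [h00, add_zero]
    apply Finset.sum_congr rfl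
    intro i _
    rw [show i+1-1 = i from rfl]
    push_cast
    ring
  rw [m1, m2, m3]
  ring

lemma mass_eq_Fs : ∀ p : ℕ, massSymbol p = Fs p := by
  intro p
  induction p with
  | zero =>
    funext θ
    rw [mass_eq]
    show ∑ l ∈ Finset.Icc (-(0:ℤ)) (0:ℤ), eA 0 l * Real.cos ((l:ℝ)*θ) = _
    rw [show (-(0:ℤ)) = (0:ℤ) by ring, Finset.Icc_self, Finset.sum_singleton]
    have : eA 0 0 = 1 := by norm_num [eA, eulerianNum]
    simp [this, Fs, Bc]
  | succ p ih =>
    funext θ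
    have hD1 : ∀ θ, D1 p θ = FD1 p θ := by
      intro θ
      exact (hasDerivAt_mass p θ).unique (ih ▸ hasDerivAt_Fs p θ)
    have hD2 : D2 p θ = FD2 p θ := by
      have h1 : D1 p = FD1 p := funext hD1
      exact (hasDerivAt_D1 p θ).unique (h1 ▸ hasDerivAt_FD1 p θ)
    have hmain := mass_rec p θ
    rw [ih, hD1, hD2, Fs_rec] at hmain
    have hne : ((p:ℝ)+1) * (2*((p:ℝ)+1)+1) ≠ 0 := by positivity
    exact mul_left_cancel₀ hne hmain

/-- Lemma 4 of the paper: the symbol of the mass matrix is positive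
and monotone in `cos θ`. -/
theorem massSymbol_pos_and_monotone (p : ℕ) (hp : 1 ≤ p) :
    (∀ θ : ℝ, 0 < massSymbol p θ) ∧
    (∀ θ₁ θ₂ : ℝ, Real.cos θ₁ ≤ Real.cos θ₂ → massSymbol p θ₁ ≤ massSymbol p θ₂) := by
  have key : ∀ θ, massSymbol p θ = Fs p θ := fun θ => congrFun (mass_eq_Fs p) θ
  constructor
  · intro θ
    rw [key θ, Fs]
    rw [Finset.sum_range_succ']
    have h1 : 0 < Bc p 0 * (1 + Real.cos θ)^0 := by
      simpa using Bc_zero_pos p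
    have h2 : 0 ≤ ∑ k ∈ Finset.range p, Bc p (k+1) * (1 + Real.cos θ)^(k+1) := by
      apply Finset.sum_nonneg
      intro k hk
      apply mul_nonneg
      · apply Bc_nonneg
        have : k < p := Finset.mem_range.mp hk
        push_cast
        have : (k:ℝ) + 1 ≤ (p:ℝ) := by exact_mod_cast Nat.succ_le_of_lt this
        linarith
      · have h := Real.neg_one_le_cos θ
        have h' : (0:ℝ) ≤ 1 + Real.cos θ := by linarith
        positivity
    linarith
  · intro θ₁ θ₂ hc
    rw [key θ₁, key θ₂, Fs, Fs]
    apply Finset.sum_le_sum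
    intro k hk
    have hBk : 0 ≤ Bc p k := by
      apply Bc_nonneg
      have : k < p + 1 := Finset.mem_range.mp hk
      exact_mod_cast Nat.cast_le.mpr (by omega : k ≤ p+1)
    apply mul_le_mul_of_nonneg_left _ hBk
    apply pow_le_pow_left₀
    · linarith [Real.neg_one_le_cos θ₁]
    · linarith
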